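/- For every n ≥ 1 and every odd m ≥ 3, there exists a random forest F consisting of m decision trees on variables x_1,…,x_n such that: F(x) = 1 for every x ∈ {0,1}^n; the empty term is the unique sufficient reason for every instance x given F; and for every instance x, the complete term t_x (of size n) is the unique majoritary reason for x given F. Consequently, every majoritary reason contains n more features than the sufficient reason. Such an F is obtained by taking ⌊m/2⌋ decision trees computing the parity function x_1 ⊕ … ⊕ x_n, ⌊m/2⌋ decision trees computing its negation, and one decision tree reduced to a 1-leaf. -/
import Mathlib


/-- A Boolean decision tree on variables `x_1, …, x_n`. -/
inductive DTree (n : ℕ) : Type where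
  | leaf : Bool → DTree n
  | node : Fin n → DTree n → DTree n → DTree n

namespace DTree

/-- Evaluation of a decision tree on an instance `x ∈ {0,1}^n`. -/
def eval {n : ℕ} : DTree n → (Fin n → Bool) → Bool
  | leaf b, _ => b
  | node i l r, x => if x i = true then r.eval x else l.eval x

/-- The tree obtained by flipping every leaf label. -/
def neg {n : ℕ} : DTree n → DTree n
  | leaf b => leaf (!b)
  | node i l r => node i l.neg r.neg

/-- Auxiliary predicate: no variable from `s` is queried, and no variable is
queried twice along any root-to-leaf path. -/
def readOnceAux {n : ℕ} : DTree n → Finset (Fin n) → Prop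
  | leaf _, _ => True
  | node i l r, s => i ∉ s ∧ l.readOnceAux (insert i s) ∧ r.readOnceAux (insert i s)

/-- Every variable occurs at most once on any root-to-leaf path. -/
def readOnce {n : ℕ} (T : DTree n) : Prop := T.readOnceAux ∅

/-- The list of terms of the root-to-leaf paths of `T` ending in a leaf labeled `b`;
a literal is a pair `(i, c)` meaning `x_i` if `c = true` and `¬ x_i` if `c = false`. -/
def paths {n : ℕ} (b : Bool) : DTree n → List (Finset (Fin n × Bool))
  | leaf c => if c = b then [∅] else []
  | node i l r => (l.paths b).map (insert (i, false)) ++ (r.paths b).map (insert (i, true))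

/-- The term of the unique root-to-leaf path of `T` that covers the instance `x`. -/
def pathTerm {n : ℕ} : DTree n → (Fin n → Bool) → Finset (Fin n × Bool)
  | leaf _, _ => ∅
  | node i l r, x =>
      if x i = true then insert (i, true) (r.pathTerm x) else insert (i, false) (l.pathTerm x)

end DTree

/-- A term (set of literals) covers an instance `x` if every literal of it is satisfied by `x`. -/
def covers {n : ℕ} (t : Finset (Fin n × Bool)) (x : Fin n → Bool) : Prop :=
  ∀ l ∈ t, x l.1 = l.2

/-- A term is consistent if it contains no pair of opposite literals. -/
def consistentTerm {n : ℕ} (t : Finset (Fin n × Bool)) : Prop :=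
  ∀ i : Fin n, ¬ ((i, true) ∈ t ∧ (i, false) ∈ t)

/-- `t` is an implicant of the Boolean function `f`. -/
def implicant {n : ℕ} (t : Finset (Fin n × Bool)) (f : (Fin n → Bool) → Bool) : Prop :=
  ∀ z : Fin n → Bool, covers t z → f z = true

/-- The complete term `t_x` of an instance `x`. -/
def termOf {n : ℕ} (x : Fin n → Bool) : Finset (Fin n × Bool) :=
  Finset.univ.image (fun i => (i, x i))

/-- Majority vote of a random forest `F = {T_1, …, T_m}`: output `1` iff strictly more than
`m / 2` of the trees output `1`. -/
def forestEval {n m : ℕ} (T : Fin m → DTree n) (x : Fin n → Bool) : Bool :=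
  decide (m < 2 * (Finset.univ.filter (fun i => (T i).eval x = true)).card)

/-- `t` is an implicant of at least `⌊m/2⌋ + 1` of the trees of the forest. -/
def majImp {n m : ℕ} (T : Fin m → DTree n) (t : Finset (Fin n × Bool)) : Prop :=
  m / 2 + 1 ≤ {i : Fin m | implicant t ((T i).eval)}.ncard

/-- A majoritary reason for `x` given the forest `T` (case `F(x) = 1`). -/
def majReason {n m : ℕ} (T : Fin m → DTree n) (x : Fin n → Bool)
    (t : Finset (Fin n × Bool)) : Prop :=
  covers t x ∧ majImp T t ∧ ∀ l ∈ t, ¬ majImp T (t.erase l)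

/-- A sufficient reason for `x` given the forest `T`: a prime implicant of the forest
covering `x` (case `F(x) = 1`). -/
def suffReason {n m : ℕ} (T : Fin m → DTree n) (x : Fin n → Bool)
    (t : Finset (Fin n × Bool)) : Prop :=
  covers t x ∧ implicant t (forestEval T) ∧ ∀ s ⊂ t, ¬ implicant s (forestEval T)

/-- The direct reason for `x` given the forest `T` (case `F(x) = 1`): the union of the
path terms of `x` in the trees that classify `x` positively. -/
def directReason {n m : ℕ} (T : Fin m → DTree n) (x : Fin n → Bool) :
    Finset (Fin n × Bool) :=
  (Finset.univ.filter (fun i => (T i).eval x = true)).sup (fun i => (T i).pathTerm x)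

/-- The parity function `x_1 ⊕ … ⊕ x_n`. -/
def parity (n : ℕ) (x : Fin n → Bool) : Bool :=
  decide (Odd (Finset.univ.filter (fun i => x i = true)).card)


section AuxForMajGap
open Classical

def parTree {n : ℕ} : List (Fin n) → Bool → DTree n
  | [], b => .leaf b
  | i :: l, b => .node i (parTree l b) (parTree l (!b))

lemma parTree_eval {n : ℕ} (l : List (Fin n)) (b : Bool) (x : Fin n → Bool) :
    (parTree l b).eval x = xor b (decide (Odd (l.countP (fun i => x i)))) := by
  induction l generalizing b with
  | nil => simp [parTree, DTree.eval, Nat.odd_iff]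
  | cons i l ih =>
    simp only [parTree, DTree.eval, List.countP_cons]
    by_cases h : x i = true
    · rw [if_pos h, ih]
      simp [h, Nat.odd_add_one, ← Nat.not_odd_iff_even]
    · rw [if_neg h, ih]
      simp [Bool.not_eq_true] at h
      simp [h]

lemma parity_eq_countP {n : ℕ} (x : Fin n → Bool) :
    parity n x = decide (Odd ((List.finRange n).countP (fun i => x i))) := by
  unfold parity
  congr 2
  rw [List.countP_eq_length_filter, ← List.toFinset_card_of_nodup
    ((List.nodup_finRange n).filter _)]
  congr 1
  ext i
  simp

lemma parTree_eval_finRange {n : ℕ} (b : Bool) (x : Fin n → Bool) :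
    (parTree (List.finRange n) b).eval x = xor b (parity n x) := by
  rw [parTree_eval, parity_eq_countP]

lemma parTree_readOnceAux {n : ℕ} (l : List (Fin n)) (b : Bool) (s : Finset (Fin n))
    (hl : l.Nodup) (hs : ∀ i ∈ l, i ∉ s) : (parTree l b).readOnceAux s := by
  induction l generalizing b s with
  | nil => trivial
  | cons i l ih =>
    refine ⟨hs i (by simp), ?_, ?_⟩ <;>
    · apply ih _ _ hl.of_cons
      intro j hj
      simp only [Finset.mem_insert]
      push_neg
      exact ⟨fun h => (List.nodup_cons.mp hl).1 (h ▸ hj), hs j (by simp [hj])⟩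

lemma parTree_readOnce {n : ℕ} (b : Bool) : (parTree (List.finRange n) b).readOnce :=
  parTree_readOnceAux _ _ _ (List.nodup_finRange n) (by simp)

lemma parity_update {n : ℕ} (x : Fin n → Bool) (j : Fin n) :
    parity n (Function.update x j (!x j)) = !(parity n x) := by
  unfold parity
  rw [← decide_not, decide_eq_decide]
  set S := Finset.univ.filter (fun i => x i = true) with hS
  have key : Finset.univ.filter (fun i => Function.update x j (!x j) i = true) =
      if x j = true then S.erase j else insert j S := by
    ext i
    by_cases hij : i = j
    · subst hij
      simp [Function.update_self, hS]
      cases x i <;> simp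
    · rw [hS]
      simp only [Finset.mem_filter, Finset.mem_univ, true_and, Function.update_of_ne hij]
      split_ifs <;> simp [Finset.mem_erase, Finset.mem_insert, hij]
  rw [key]
  by_cases hj : x j = true
  · have hjS : j ∈ S := by simp [hS, hj]
    rw [if_pos hj, Finset.card_erase_of_mem hjS]
    have : 1 ≤ S.card := Finset.card_pos.mpr ⟨j, hjS⟩
    simp only [Nat.odd_iff] at *
    omega
  · have hjS : j ∉ S := by simp [hS, hj]
    rw [if_neg hj, Finset.card_insert_of_notMem hjS]
    simp only [Nat.odd_iff] at *
    omega

lemma card_filter_fin (m : ℕ) (p : ℕ → Prop) [DecidablePred p] :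
    (Finset.univ.filter (fun i : Fin m => p (i : ℕ))).card = ((Finset.range m).filter p).card := by
  rw [← Nat.Iio_eq_range, ← Fin.map_valEmbedding_univ, Finset.filter_map, Finset.card_map]
  rfl

lemma card_lt_or_eq (m : ℕ) (hodd : Odd m) :
    (Finset.univ.filter (fun i : Fin m => (i : ℕ) < m / 2 ∨ (i : ℕ) = 2 * (m / 2))).card
      = m / 2 + 1 := by
  rw [card_filter_fin m (fun a => a < m / 2 ∨ a = 2 * (m / 2))]
  have hm : m % 2 = 1 := Nat.odd_iff.mp hodd
  have : (Finset.range m).filter (fun i => i < m / 2 ∨ i = 2 * (m / 2)) =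
      insert (2 * (m / 2)) (Finset.range (m / 2)) := by
    ext a; simp; omega
  rw [this, Finset.card_insert_of_notMem (by simp; omega), Finset.card_range]

lemma card_ge (m : ℕ) (hodd : Odd m) :
    (Finset.univ.filter (fun i : Fin m => m / 2 ≤ (i : ℕ))).card = m / 2 + 1 := by
  rw [card_filter_fin m (fun a => m / 2 ≤ a)]
  have hm : m % 2 = 1 := Nat.odd_iff.mp hodd
  have : (Finset.range m).filter (fun i => m / 2 ≤ i) = Finset.Ico (m / 2) m := by
    ext a; simp; omega
  rw [this, Nat.card_Ico]
  omega

lemma mem_termOf {n : ℕ} (x : Fin n → Bool) (i : Fin n) (c : Bool) :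
    (i, c) ∈ termOf x ↔ c = x i := by
  simp only [termOf, Finset.mem_image, Finset.mem_univ, true_and, Prod.mk.injEq]
  constructor
  · rintro ⟨a, rfl, rfl⟩; rfl
  · rintro rfl; exact ⟨i, rfl, rfl⟩

lemma covers_termOf {n : ℕ} (x : Fin n → Bool) : covers (termOf x) x := by
  rintro ⟨i, c⟩ hl
  exact ((mem_termOf x i c).mp hl).symm

lemma covers_termOf_eq {n : ℕ} {x z : Fin n → Bool} (hz : covers (termOf x) z) : z = x := by
  funext i
  exact hz (i, x i) ((mem_termOf x i (x i)).mpr rfl)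

lemma covers_subset {n : ℕ} {s t : Finset (Fin n × Bool)} {x : Fin n → Bool}
    (hst : s ⊆ t) (h : covers t x) : covers s x := fun l hl => h l (hst hl)

lemma covers_subset_termOf {n : ℕ} {t : Finset (Fin n × Bool)} {x : Fin n → Bool}
    (h : covers t x) : t ⊆ termOf x := by
  rintro ⟨i, c⟩ hl
  exact (mem_termOf x i c).mpr (h (i, c) hl).symm

lemma card_termOf {n : ℕ} (x : Fin n → Bool) : (termOf x).card = n := by
  rw [termOf, Finset.card_image_of_injective _ (fun a b h => by simpa using congrArg Prod.fst h)]
  simp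

lemma covers_update {n : ℕ} {t : Finset (Fin n × Bool)} {x : Fin n → Bool} {j : Fin n}
    (hcov : covers t x) (hmiss : ∀ c, (j, c) ∉ t) :
    covers t (Function.update x j (!x j)) := by
  rintro ⟨i, c⟩ hl
  rcases eq_or_ne i j with rfl | hne
  · exact absurd hl (hmiss c)
  · simpa [Function.update_of_ne hne] using hcov (i, c) hl

end AuxForMajGap

/-- for every `n ≥ 1` and odd `m ≥ 3` there is a random forest of `m` trees —
`⌊m/2⌋` trees computing the parity function, `⌊m/2⌋` trees computing its negation, and one
tree reduced to a 1-leaf — that is valid, whose unique sufficient reason for any instance is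
the empty term, and whose unique majoritary reason for any instance `x` is the complete term
`t_x`; consequently every majoritary reason has `n` more features than the sufficient
reason. -/
theorem majoritary_vs_sufficient_gap (n m : ℕ) (hn : 1 ≤ n) (hm : 3 ≤ m) (hodd : Odd m) :
    ∃ T : Fin m → DTree n,
      (∀ i, (T i).readOnce) ∧
      (∀ i : Fin m, (i : ℕ) < m / 2 → ∀ x, (T i).eval x = parity n x) ∧
      (∀ i : Fin m, m / 2 ≤ (i : ℕ) → (i : ℕ) < 2 * (m / 2) →
        ∀ x, (T i).eval x = !(parity n x)) ∧
      (∀ i : Fin m, (i : ℕ) = 2 * (m / 2) → T i = DTree.leaf true) ∧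
      (∀ x : Fin n → Bool, forestEval T x = true) ∧
      (∀ (x : Fin n → Bool) (t : Finset (Fin n × Bool)), suffReason T x t ↔ t = ∅) ∧
      (∀ (x : Fin n → Bool) (t : Finset (Fin n × Bool)), majReason T x t ↔ t = termOf x) ∧
      (∀ (x : Fin n → Bool) (t s : Finset (Fin n × Bool)),
        majReason T x t → suffReason T x s → t.card = s.card + n) := by
  classical
  have hmod : m % 2 = 1 := Nat.odd_iff.mp hodd
  set T : Fin m → DTree n := fun i =>
    if (i : ℕ) < m / 2 then parTree (List.finRange n) false
    else if (i : ℕ) < 2 * (m / 2) then parTree (List.finRange n) true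
    else DTree.leaf true with hT
  have hT1 : ∀ i : Fin m, (i : ℕ) < m / 2 → ∀ x, (T i).eval x = parity n x := by
    intro i hi x
    rw [hT]
    simp only [if_pos hi]
    rw [parTree_eval_finRange]
    simp
  have hT2 : ∀ i : Fin m, m / 2 ≤ (i : ℕ) → (i : ℕ) < 2 * (m / 2) →
      ∀ x, (T i).eval x = !(parity n x) := by
    intro i hi1 hi2 x
    rw [hT]
    simp only [if_neg (by omega : ¬ ((i : ℕ) < m / 2)), if_pos hi2]
    rw [parTree_eval_finRange]
    simp
  have hT3 : ∀ i : Fin m, (i : ℕ) = 2 * (m / 2) → T i = DTree.leaf true := by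
    intro i hi
    rw [hT]
    simp only [hi]
    rw [if_neg (by omega), if_neg (by omega)]
  have htri : ∀ i : Fin m, (i : ℕ) < m / 2 ∨ (m / 2 ≤ (i : ℕ) ∧ (i : ℕ) < 2 * (m / 2)) ∨
      (i : ℕ) = 2 * (m / 2) := by
    intro i
    have := i.isLt
    omega
  have hcount : ∀ x, (Finset.univ.filter (fun i => (T i).eval x = true)).card = m / 2 + 1 := by
    intro x
    cases hpx : parity n x with
    | true =>
      have heq : (Finset.univ.filter (fun i => (T i).eval x = true)) =
          Finset.univ.filter (fun i : Fin m => (i : ℕ) < m / 2 ∨ (i : ℕ) = 2 * (m / 2)) := by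
        apply Finset.filter_congr
        intro i _
        rcases htri i with h | h | h
        · simp [hT1 i h x, hpx, h]
        · have : ¬ ((i : ℕ) < m / 2 ∨ (i : ℕ) = 2 * (m / 2)) := by omega
          simp [hT2 i h.1 h.2 x, hpx, this]
        · simp [hT3 i h, DTree.eval, h]
      rw [heq, card_lt_or_eq m hodd]
    | false =>
      have heq : (Finset.univ.filter (fun i => (T i).eval x = true)) =
          Finset.univ.filter (fun i : Fin m => m / 2 ≤ (i : ℕ)) := by
        apply Finset.filter_congr
        intro i _
        rcases htri i with h | h | h
        · have : ¬ (m / 2 ≤ (i : ℕ)) := by omega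
          simp [hT1 i h x, hpx, this]
        · simp [hT2 i h.1 h.2 x, hpx, h.1]
        · have : m / 2 ≤ (i : ℕ) := by omega
          simp [hT3 i h, DTree.eval, this]
      rw [heq, card_ge m hodd]
  have hvalid : ∀ x, forestEval T x = true := by
    intro x
    unfold forestEval
    rw [hcount x]
    simp only [decide_eq_true_eq]
    omega
  have himpA : ∀ x : Fin n → Bool, majImp T (termOf x) := by
    intro x
    unfold majImp
    cases hpx : parity n x with
    | true =>
      have hsub : (↑(Finset.univ.filter
            (fun i : Fin m => (i : ℕ) < m / 2 ∨ (i : ℕ) = 2 * (m / 2))) : Set (Fin m)) ⊆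
          {i : Fin m | implicant (termOf x) ((T i).eval)} := by
        intro i hi
        simp only [Finset.coe_filter, Finset.mem_univ, true_and, Set.mem_setOf_eq] at hi ⊢
        intro z hz
        rcases hi with h | h
        · rw [hT1 i h z, covers_termOf_eq hz, hpx]
        · rw [hT3 i h]; rfl
      calc m / 2 + 1
          = (↑(Finset.univ.filter
              (fun i : Fin m => (i : ℕ) < m / 2 ∨ (i : ℕ) = 2 * (m / 2))) : Set (Fin m)).ncard := by
            rw [Set.ncard_coe_finset, card_lt_or_eq m hodd]
        _ ≤ _ := Set.ncard_le_ncard hsub (Set.toFinite _)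
    | false =>
      have hsub : (↑(Finset.univ.filter (fun i : Fin m => m / 2 ≤ (i : ℕ))) : Set (Fin m)) ⊆
          {i : Fin m | implicant (termOf x) ((T i).eval)} := by
        intro i hi
        simp only [Finset.coe_filter, Finset.mem_univ, true_and, Set.mem_setOf_eq] at hi ⊢
        intro z hz
        rcases htri i with h | h | h
        · omega
        · rw [hT2 i h.1 h.2 z, covers_termOf_eq hz, hpx]
          rfl
        · rw [hT3 i h]; rfl
      calc m / 2 + 1
          = (↑(Finset.univ.filter (fun i : Fin m => m / 2 ≤ (i : ℕ))) : Set (Fin m)).ncard := by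
            rw [Set.ncard_coe_finset, card_ge m hodd]
        _ ≤ _ := Set.ncard_le_ncard hsub (Set.toFinite _)
  have himpB : ∀ (x : Fin n → Bool) (t : Finset (Fin n × Bool)) (j : Fin n),
      covers t x → (∀ c, (j, c) ∉ t) → ¬ majImp T t := by
    intro x t j hcov hmiss hmaj
    have hup := covers_update hcov hmiss
    have hlast : 2 * (m / 2) < m := by omega
    have hsub : {i : Fin m | implicant t ((T i).eval)} ⊆
        {(⟨2 * (m / 2), hlast⟩ : Fin m)} := by
      intro i hi
      simp only [Set.mem_setOf_eq] at hi
      rcases htri i with h | h | h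
      · exfalso
        have h1 := hi x hcov
        have h2 := hi _ hup
        rw [hT1 i h] at h1 h2
        rw [parity_update] at h2
        rw [h1] at h2
        simp at h2
      · exfalso
        have h1 := hi x hcov
        have h2 := hi _ hup
        rw [hT2 i h.1 h.2] at h1 h2
        rw [parity_update] at h2
        simp at h1 h2
        rw [h2] at h1
        simp at h1
      · simp [Set.mem_singleton_iff, Fin.ext_iff, h]
    have hle := Set.ncard_le_ncard hsub (Set.finite_singleton _)
    rw [Set.ncard_singleton] at hle
    unfold majImp at hmaj
    omega
  have hsuffIff : ∀ (x : Fin n → Bool) (t : Finset (Fin n × Bool)),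
      suffReason T x t ↔ t = ∅ := by
    intro x t
    constructor
    · rintro ⟨hcov, himp, hmin⟩
      by_contra hne
      exact hmin ∅ (Finset.empty_ssubset.mpr (Finset.nonempty_iff_ne_empty.mpr hne))
        (fun z _ => hvalid z)
    · rintro rfl
      exact ⟨fun l hl => absurd hl (Finset.notMem_empty l), fun z _ => hvalid z,
        fun s hs => absurd hs (Finset.not_ssubset_empty s)⟩
  have hmajIff : ∀ (x : Fin n → Bool) (t : Finset (Fin n × Bool)),
      majReason T x t ↔ t = termOf x := by
    intro x t
    constructor
    · rintro ⟨hcov, hmaj, -⟩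
      have hsubt := covers_subset_termOf hcov
      have hfull : ∀ i : Fin n, (i, x i) ∈ t := by
        intro i
        by_contra hmem
        have hmiss : ∀ c, (i, c) ∉ t := by
          intro c hc
          have hxc : x i = c := hcov (i, c) hc
          rw [← hxc] at hc
          exact hmem hc
        exact himpB x t i hcov hmiss hmaj
      apply Finset.Subset.antisymm hsubt
      rintro ⟨i, c⟩ hl
      rw [mem_termOf] at hl
      rw [hl]
      exact hfull i
    · rintro rfl
      refine ⟨covers_termOf x, himpA x, ?_⟩
      rintro ⟨i, c⟩ hl
      rw [mem_termOf] at hl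
      subst hl
      apply himpB x _ i (covers_subset (Finset.erase_subset _ _) (covers_termOf x))
      intro c' hc'
      have h1 := Finset.mem_of_mem_erase hc'
      rw [mem_termOf] at h1
      subst h1
      exact Finset.notMem_erase _ _ hc'
  refine ⟨T, ?_, hT1, hT2, hT3, hvalid, hsuffIff, hmajIff, ?_⟩
  · intro i
    rw [hT]
    dsimp only
    split_ifs
    · exact parTree_readOnce false
    · exact parTree_readOnce true
    · trivial
  · intro x t s ht hs
    rw [(hmajIff x t).mp ht, (hsuffIff x s).mp hs, card_termOf, Finset.card_empty]
    omega
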